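/- The improper integral ∫₀^∞ -log(1 - e^{-z}) dz equals π²/6. -/

import Mathlib

open MeasureTheory Real Set

lemma integral_exp_neg_mul_Ioi_zero {c : ℝ} (hc : 0 < c) :
    ∫ x in Ioi (0 : ℝ), Real.exp (-(c * x)) = 1 / c := by
  have := MeasureTheory.integral_comp_mul_left_Ioi (fun x => Real.exp (-x)) 0 hc
  simp only [mul_zero, integral_exp_neg_Ioi_zero, smul_eq_mul, mul_one] at this
  rw [this, one_div]

lemma summable_aux : Summable (fun k : ℕ => 1 / ((k : ℝ) + 1) ^ 2) := by
  have := (summable_nat_add_iff 1).mpr hasSum_zeta_two.summable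
  simpa using this

theorem integral_f_eq_pi_sq_div_six :
    ∫ z in Set.Ioi (0 : ℝ), -Real.log (1 - Real.exp (-z)) = Real.pi ^ 2 / 6 := by
  set f : ℕ → ℝ → ℝ := fun k z => Real.exp (-(((k : ℝ) + 1) * z)) / ((k : ℝ) + 1) with hf
  have hkpos : ∀ k : ℕ, (0 : ℝ) < (k : ℝ) + 1 := fun k => by positivity
  have hpt : ∀ z ∈ Ioi (0 : ℝ), -Real.log (1 - Real.exp (-z)) = ∑' k, f k z := by
    intro z hz
    have hz' : |Real.exp (-z)| < 1 := by
      rw [abs_of_pos (Real.exp_pos _)]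
      exact Real.exp_lt_one_iff.mpr (neg_neg_iff_pos.mpr hz)
    have := hasSum_pow_div_log_of_abs_lt_one hz'
    have heq : (fun n : ℕ => Real.exp (-z) ^ (n + 1) / ((n : ℝ) + 1)) = fun n => f n z := by
      funext n
      rw [hf]
      simp only [← Real.exp_nat_mul]
      congr 2
      push_cast
      ring
    rw [heq] at this
    exact this.tsum_eq.symm
  have hint : ∀ k, IntegrableOn (f k) (Ioi (0 : ℝ)) := fun k => by
    simpa only [hf, neg_mul, IntegrableOn] using (exp_neg_integrableOn_Ioi 0 (hkpos k)).div_const ((k : ℝ) + 1)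
  have hval : ∀ k, ∫ z in Ioi (0 : ℝ), f k z = 1 / ((k : ℝ) + 1) ^ 2 := by
    intro k
    rw [hf]
    simp only [integral_div, integral_exp_neg_mul_Ioi_zero (hkpos k)]
    field_simp
  have hnn : ∀ k, ∀ z : ℝ, 0 ≤ f k z := fun k z => by
    rw [hf]; positivity
  rw [setIntegral_congr_fun measurableSet_Ioi hpt]
  rw [MeasureTheory.integral_tsum]
  · have : (fun k : ℕ => ∫ z in Ioi (0 : ℝ), f k z) = fun k : ℕ => 1 / ((k : ℝ) + 1) ^ 2 := by
      funext k; exact hval k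
    rw [this]
    have h0 : ∑' n : ℕ, (1 : ℝ) / (n : ℝ) ^ 2 = Real.pi ^ 2 / 6 := hasSum_zeta_two.tsum_eq
    rw [Summable.tsum_eq_zero_add hasSum_zeta_two.summable] at h0
    simpa using h0
  · intro k
    exact (Continuous.aestronglyMeasurable (by continuity)).restrict
  · have hlint : ∀ k : ℕ, ∫⁻ z in Ioi (0 : ℝ), ‖f k z‖ₑ =
        ENNReal.ofReal (1 / ((k : ℝ) + 1) ^ 2) := by
      intro k
      rw [← hval k, MeasureTheory.ofReal_integral_eq_lintegral_ofReal (hint k)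
        (Filter.Eventually.of_forall fun z => hnn k z)]
      congr 1
      funext z
      exact Real.enorm_eq_ofReal (hnn k z)
    simp only [hlint]
    rw [← ENNReal.ofReal_tsum_of_nonneg (fun k => by positivity) summable_aux]
    exact ENNReal.ofReal_ne_top
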